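/- arXiv:2001.00510 — 3 statements merged into one kernel-verified Lean document; each statement's English description precedes it below -/
import Mathlib

section
/- (Necessity.) Assume σ_{α0} < σ_{α1} and σ_β ≥ σ_max. Then there is no σ < σ_max with R₀(σ) = R₁(σ); i.e., no admissible treadmilling solution exists. -/
open Set Filter

/-- Necessity: if σ_{α0} < σ_{α1} and σ_β ≥ σ_max, there is no admissible treadmilling
solution, i.e. no σ < σ_max with R₀(σ) = R₁(σ). -/
theorem stmt17 (Wstar : ℝ → ℝ)
    (hmono : StrictMono Wstar) (hcont : Continuous Wstar) (hsurj : Function.Surjective Wstar)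
    (B0 B1 σmax σasymp σα0 σα1 σβ Δσ β : ℝ)
    (hB0 : 0 < B0) (hB1 : 0 < B1) (hβ : β = B0 / B1)
    (hΔσ : Δσ = σasymp - σmax) (hΔσpos : 0 < Δσ)
    (hσβ : Wstar σβ = (1 / (1 + β)) * Wstar σα0 + (β / (1 + β)) * Wstar σα1)
    (R0 R1 : ℝ → ℝ)
    (hR0 : ∀ σ : ℝ, R0 σ = -(Δσ / B0) * (Wstar σ - Wstar σα0) / (σasymp - σ))
    (hR1 : ∀ σ : ℝ, R1 σ = (1 / B1) * (Wstar σ - Wstar σα1))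
    (hR0anti : StrictAntiOn R0 (Ioo σα0 σasymp))
    (hα : σα0 < σα1) (hβmax : σmax ≤ σβ) :
    ¬ ∃ σ : ℝ, σ < σmax ∧ R0 σ = R1 σ := by
  rintro ⟨σ, hσ, heq⟩
  have hβpos : 0 < β := hβ ▸ div_pos hB0 hB1
  have h1β : (0:ℝ) < 1 + β := by linarith
  have hW01 : Wstar σα0 < Wstar σα1 := hmono hα
  -- combination identity
  have hcomb : (B0 + B1) * Wstar σβ = B1 * Wstar σα0 + B0 * Wstar σα1 := by
    have hβ' : β = B0 / B1 := hβ
    have h1 : (1 + β) * Wstar σβ = Wstar σα0 + β * Wstar σα1 := by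
      rw [hσβ]; field_simp
    rw [hβ'] at h1
    field_simp at h1
    linarith
  have hWβ0 : Wstar σα0 < Wstar σβ := by nlinarith
  have hWβ1 : Wstar σβ < Wstar σα1 := by nlinarith
  have hσσβ : σ < σβ := lt_of_lt_of_le hσ hβmax
  have hWσβ : Wstar σ < Wstar σβ := hmono hσσβ
  have hden : Δσ < σasymp - σ := by rw [hΔσ]; linarith
  have hdenpos : 0 < σasymp - σ := lt_trans hΔσpos hden
  -- clear denominators in heq
  have heq2 : -(Δσ / B0) * (Wstar σ - Wstar σα0) =
      (1 / B1) * (Wstar σ - Wstar σα1) * (σasymp - σ) := by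
    have h := heq
    rw [hR0 σ, hR1 σ] at h
    field_simp at h ⊢
    linarith [h]
  have heq3 : -(Δσ * B1) * (Wstar σ - Wstar σα0) =
      B0 * (Wstar σ - Wstar σα1) * (σasymp - σ) := by
    have hB0' : B0 ≠ 0 := ne_of_gt hB0
    have hB1' : B1 ≠ 0 := ne_of_gt hB1
    field_simp at heq2
    linarith [heq2]
  rcases le_or_gt (Wstar σα0) (Wstar σ) with hcase | hcase
  · -- W σ ≥ W σα0
    have key : 0 ≤ (σasymp - σ - Δσ) * (B1 * (Wstar σ - Wstar σα0)) :=
      mul_nonneg (by linarith) (mul_nonneg hB1.le (by linarith))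
    have hfin : 0 < (σasymp - σ) * ((B0 + B1) * (Wstar σβ - Wstar σ)) :=
      mul_pos hdenpos (mul_pos (by linarith) (by linarith))
    nlinarith [heq3, key, hfin, hcomb]
  · -- W σ < W σα0
    have hL : 0 < -(Δσ * B1) * (Wstar σ - Wstar σα0) := by
      have h := mul_pos (mul_pos hΔσpos hB1)
        (show (0:ℝ) < Wstar σα0 - Wstar σ by linarith)
      nlinarith [h]
    have hR : B0 * (Wstar σ - Wstar σα1) * (σasymp - σ) < 0 := by
      have h := mul_pos (mul_pos hB0
        (show (0:ℝ) < Wstar σα1 - Wstar σ by linarith)) hdenpos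
      nlinarith [h]
    linarith [heq3]
end

section
/- (Existence, case M_{B,0} > M_{B,1}.) Assume σ_{α1} < σ_{α0} and σ_β < σ_max. Then there exists σ_TM with σ_{α1} < σ_TM < min(σ_{α0}, σ_max) such that R₀(σ_TM) = R₁(σ_TM), and R₀(σ_TM) = R₁(σ_TM) > 0. -/
open Set Filter

/-- Existence of a treadmilling force in the case σ_{α1} < σ_{α0}, σ_β < σ_max: there is
σ_TM ∈ (σ_{α1}, min(σ_{α0}, σ_max)) with R₀(σ_TM) = R₁(σ_TM) > 0. -/
theorem stmt18 (Wstar : ℝ → ℝ)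
    (hmono : StrictMono Wstar) (hcont : Continuous Wstar) (hsurj : Function.Surjective Wstar)
    (B0 B1 σmax σasymp σα0 σα1 σβ Δσ β : ℝ)
    (hB0 : 0 < B0) (hB1 : 0 < B1) (hβ : β = B0 / B1)
    (hΔσ : Δσ = σasymp - σmax) (hΔσpos : 0 < Δσ)
    (hσβ : Wstar σβ = (1 / (1 + β)) * Wstar σα0 + (β / (1 + β)) * Wstar σα1)
    (R0 R1 : ℝ → ℝ)
    (hR0 : ∀ σ : ℝ, R0 σ = -(Δσ / B0) * (Wstar σ - Wstar σα0) / (σasymp - σ))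
    (hR1 : ∀ σ : ℝ, R1 σ = (1 / B1) * (Wstar σ - Wstar σα1))
    (hα : σα1 < σα0) (hβmax : σβ < σmax) :
    ∃ σTM : ℝ, (σα1 < σTM ∧ σTM < min σα0 σmax) ∧ R0 σTM = R1 σTM ∧ 0 < R1 σTM := by
  have hβpos : 0 < β := by rw [hβ]; positivity
  have h1β : (0:ℝ) < 1 + β := by linarith
  have hWα : Wstar σα1 < Wstar σα0 := hmono hα
  have hσβ' : Wstar σβ * (1 + β) = Wstar σα0 + β * Wstar σα1 := by
    field_simp at hσβ; linarith [hσβ]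
  have hWβ1 : Wstar σα1 < Wstar σβ := by nlinarith
  have hα1β : σα1 < σβ := hmono.lt_iff_lt.mp hWβ1
  set m := min σα0 σmax with hm
  have hσα1m : σα1 < m := lt_min hα (lt_trans hα1β hβmax)
  have hmmax : m ≤ σmax := min_le_right _ _
  have hmasymp : m < σasymp := by
    have : σmax < σasymp := by linarith
    linarith [min_le_right σα0 σmax]
  set g : ℝ → ℝ := fun σ =>
    -(Δσ / B0) * (Wstar σ - Wstar σα0) / (σasymp - σ)
      - (1 / B1) * (Wstar σ - Wstar σα1) with hg
  have hcontg : ContinuousOn g (Icc σα1 m) := by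
    apply ContinuousOn.sub
    · apply ContinuousOn.div
      · exact (continuous_const.mul (hcont.sub continuous_const)).continuousOn
      · exact (continuous_const.sub continuous_id).continuousOn
      · intro x hx
        have : x < σasymp := lt_of_le_of_lt hx.2 hmasymp
        intro h; nlinarith [sub_pos.mpr this]
    · exact (continuous_const.mul (hcont.sub continuous_const)).continuousOn
  have hga : 0 < g σα1 := by
    have h1 : 0 < σasymp - σα1 := by linarith
    have : g σα1 = (Δσ / B0) * (Wstar σα0 - Wstar σα1) / (σasymp - σα1) := by
      simp only [hg]; ring
    rw [this]
    exact div_pos (mul_pos (div_pos hΔσpos hB0) (sub_pos.mpr hWα)) h1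
  have hgb : g m < 0 := by
    rcases le_total σα0 σmax with h | h
    · have hm' : m = σα0 := min_eq_left h
      rw [hm']
      have : g σα0 = -(1 / B1) * (Wstar σα0 - Wstar σα1) := by
        simp only [hg, sub_self, mul_zero, zero_div]; ring
      rw [this]
      have := mul_pos (one_div_pos.mpr hB1) (sub_pos.mpr hWα)
      linarith
    · have hm' : m = σmax := min_eq_right h
      rw [hm']
      have hden : σasymp - σmax = Δσ := by linarith
      have hgm : g σmax = (Wstar σα0 - Wstar σmax) / B0 - (Wstar σmax - Wstar σα1) / B1 := by
        simp only [hg, hden]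
        field_simp
        ring
      rw [hgm]
      have hWβmax : Wstar σβ < Wstar σmax := hmono hβmax
      have hβB : β * B1 = B0 := by rw [hβ]; field_simp
      have key : B1 * (Wstar σα0 - Wstar σmax) < B0 * (Wstar σmax - Wstar σα1) := by
        nlinarith [mul_lt_mul_of_pos_right hWβmax (by linarith : (0:ℝ) < B0 + B1)]
      rw [div_sub_div _ _ hB0.ne' hB1.ne', div_neg_iff]
      right
      exact ⟨by nlinarith, by positivity⟩
  have h0mem : (0:ℝ) ∈ Ioo (g m) (g σα1) := ⟨hgb, hga⟩
  obtain ⟨σTM, hmem, hgeq⟩ := intermediate_value_Ioo' (le_of_lt hσα1m) hcontg h0mem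
  refine ⟨σTM, ⟨hmem.1, hmem.2⟩, ?_, ?_⟩
  · have : R0 σTM - R1 σTM = g σTM := by rw [hR0, hR1]
    rw [hgeq] at this; linarith
  · rw [hR1]
    exact mul_pos (one_div_pos.mpr hB1) (sub_pos.mpr (hmono hmem.1))
end

section
/- (Linearized stability.) Suppose σ_TM < σ_max is a treadmilling force and set F(σ_TM) = K λ̂(σ_TM)·(R₁'(σ_TM) − R₀'(σ_TM))/(K ℓ_TM λ̂'(σ_TM) + 1) with ℓ_TM = ℓ̄(σ_TM) > 0. Then F(σ_TM) > 0 if and only if R₁'(σ_TM) > R₀'(σ_TM); consequently the linearized perturbation equation δℓ' = −F(σ_TM) δℓ has exponentially decaying solutions iff R₁'(σ_TM) > R₀'(σ_TM). -/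
open Set Filter

/-- Solutions of y' = c·y are y 0 · exp(c t). -/
lemma ode_exp_sol (c : ℝ) (f : ℝ → ℝ) (hf : ∀ t : ℝ, HasDerivAt f (c * f t) t) :
    ∀ t : ℝ, f t = f 0 * Real.exp (c * t) := by
  have key : ∀ t : ℝ, f t * Real.exp (-c * t) = f 0 := by
    have hconst : ∀ t : ℝ, HasDerivAt (fun t => f t * Real.exp (-c * t)) 0 t := by
      intro t
      have hlin : HasDerivAt (fun t : ℝ => -c * t) (-c) t := by
        simpa using (hasDerivAt_id t).const_mul (-c)
      have h1 : HasDerivAt (fun t => f t * Real.exp (-c * t)) _ t := (hf t).mul hlin.exp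
      convert h1 using 1
      ring
    have := is_const_of_deriv_eq_zero (f := fun t => f t * Real.exp (-c * t))
      (fun t => (hconst t).differentiableAt) (fun t => (hconst t).deriv)
    intro t
    simpa using this t 0
  intro t
  have h1 : Real.exp (-c * t) * Real.exp (c * t) = 1 := by
    rw [← Real.exp_add]; ring_nf; exact Real.exp_zero
  calc f t = f t * Real.exp (-c * t) * Real.exp (c * t) := by
        rw [mul_assoc, h1, mul_one]
    _ = f 0 * Real.exp (c * t) := by rw [key t]

/-- Linearized stability: F(σ_TM) > 0 iff R₁'(σ_TM) > R₀'(σ_TM); consequently all solutions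
of δℓ' = −F(σ_TM) δℓ decay exponentially iff R₁'(σ_TM) > R₀'(σ_TM). -/
theorem stmt19 (lam lam' : ℝ → ℝ) (K σmax σTM : ℝ) (hK : 0 < K)
    (hlam_pos : ∀ σ : ℝ, 0 < lam σ)
    (hlam' : ∀ σ : ℝ, HasDerivAt lam (lam' σ) σ)
    (hlam'pos : ∀ σ : ℝ, 0 < lam' σ)
    (hσTM : σTM < σmax)
    (R0 R1 R0' R1' : ℝ → ℝ)
    (hR0' : ∀ σ : ℝ, HasDerivAt R0 (R0' σ) σ)
    (hR1' : ∀ σ : ℝ, HasDerivAt R1 (R1' σ) σ)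
    (hTM : R0 σTM = R1 σTM)
    (ℓTM F : ℝ)
    (hℓTM : ℓTM = (σmax - σTM) / (K * lam σTM))
    (hF : F = K * lam σTM * (R1' σTM - R0' σTM) / (K * ℓTM * lam' σTM + 1)) :
    (0 < F ↔ R0' σTM < R1' σTM) ∧
      ((∀ δℓ : ℝ → ℝ, (∀ t : ℝ, HasDerivAt δℓ (-F * δℓ t) t) →
          ∃ C a : ℝ, 0 < a ∧ ∀ t : ℝ, 0 ≤ t → |δℓ t| ≤ C * Real.exp (-a * t)) ↔
        R0' σTM < R1' σTM) := by
  have hlam := hlam_pos σTM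
  have hℓpos : 0 < ℓTM := by
    rw [hℓTM]; exact div_pos (by linarith) (by positivity)
  have hden : 0 < K * ℓTM * lam' σTM + 1 := by
    have := hlam'pos σTM; positivity
  have hiff : 0 < F ↔ R0' σTM < R1' σTM := by
    rw [hF]
    constructor
    · intro h
      by_contra hle
      push_neg at hle
      have hnum : K * lam σTM * (R1' σTM - R0' σTM) ≤ 0 :=
        mul_nonpos_of_nonneg_of_nonpos (mul_pos hK hlam).le (by linarith)
      have : K * lam σTM * (R1' σTM - R0' σTM) / (K * ℓTM * lam' σTM + 1) ≤ 0 :=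
        div_nonpos_of_nonpos_of_nonneg hnum hden.le
      linarith
    · intro h
      exact div_pos (mul_pos (mul_pos hK hlam) (by linarith)) hden
  refine ⟨hiff, ?_⟩
  rw [← hiff]
  constructor
  · intro hall
    obtain ⟨C, a, ha, hbd⟩ := hall (fun t => Real.exp (-F * t)) (by
      intro t
      have hlin : HasDerivAt (fun t : ℝ => -F * t) (-F) t := by
        simpa using (hasDerivAt_id t).const_mul (-F)
      have := hlin.exp
      convert this using 1
      ring)
    by_contra hFle
    push_neg at hFle
    have hC1 : 1 ≤ C := by
      have := hbd 0 le_rfl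
      simpa using this
    set t₀ : ℝ := Real.log C / a + 1 with ht₀
    have ht₀pos : 0 < t₀ := by
      have : 0 ≤ Real.log C := Real.log_nonneg hC1
      positivity
    have h1 : 1 ≤ Real.exp (-F * t₀) := by
      rw [Real.one_le_exp_iff]
      nlinarith
    have h2 : C * Real.exp (-a * t₀) < 1 := by
      have : C * Real.exp (-a * t₀) = Real.exp (Real.log C + (-a * t₀)) := by
        rw [Real.exp_add, Real.exp_log (by linarith)]
      rw [this]
      have : Real.log C + (-a * t₀) = -a := by
        rw [ht₀]
        field_simp
        ring
      rw [this]
      calc Real.exp (-a) < Real.exp 0 := Real.exp_lt_exp.2 (by linarith)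
        _ = 1 := Real.exp_zero
    have := hbd t₀ ht₀pos.le
    rw [abs_of_pos (Real.exp_pos _)] at this
    linarith
  · intro hFpos δℓ hδℓ
    refine ⟨|δℓ 0|, F, hFpos, fun t ht => ?_⟩
    have hsol := ode_exp_sol (-F) δℓ hδℓ t
    rw [hsol, abs_mul, abs_of_pos (Real.exp_pos _)]
end
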